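/- Let S be a semigroup admitting an invariant mean m (both left and right invariant), let Z be a real Banach space and X = Z* its dual. Then there exists a bounded linear invariant mean M : B(S,X) → X such that for every f ∈ B(S,X), M(f) lies in the weak*-closed convex hull of the range f(S). -/

import Mathlib

noncomputable section
open BoundedContinuousFunction

/-- For a bounded function `f` on a (discrete) semigroup `S`, the translate `t ↦ f (t * s)`. -/
def rightTranslate {S : Type*} [Semigroup S] [TopologicalSpace S] [DiscreteTopology S]
    {E : Type*} [PseudoMetricSpace E]
    (f : S →ᵇ E) (s : S) : S →ᵇ E :=
  f.compContinuous ⟨fun t => t * s, continuous_of_discreteTopology⟩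

/-- For a bounded function `f` on a (discrete) semigroup `S`, the translate `t ↦ f (s * t)`. -/
def leftTranslate {S : Type*} [Semigroup S] [TopologicalSpace S] [DiscreteTopology S]
    {E : Type*} [PseudoMetricSpace E]
    (f : S →ᵇ E) (s : S) : S →ᵇ E :=
  f.compContinuous ⟨fun t => s * t, continuous_of_discreteTopology⟩

/-- A left-invariant mean on a semigroup `S`: a positive, norm-one continuous linear
functional `m` on the space of bounded real functions on `S` with `m 𝟙 = 1` and
`m (t ↦ f (t * s)) = m f` for all `f` and `s`. -/
def IsLeftInvariantMean {S : Type*} [Semigroup S] [TopologicalSpace S] [DiscreteTopology S]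
    (m : (S →ᵇ ℝ) →L[ℝ] ℝ) : Prop :=
  (∀ f : S →ᵇ ℝ, (∀ t, 0 ≤ f t) → 0 ≤ m f) ∧ ‖m‖ = 1 ∧
  m (const S (1 : ℝ)) = 1 ∧
  ∀ (f : S →ᵇ ℝ) (s : S), m (rightTranslate f s) = m f

/-- An invariant mean on a semigroup `S`: a positive, norm-one continuous linear functional
`m` on the bounded real functions on `S` with `m 𝟙 = 1` which is both left invariant
(`m (t ↦ f (t * s)) = m f`) and right invariant (`m (t ↦ f (s * t)) = m f`). -/
def IsInvariantMean {S : Type*} [Semigroup S] [TopologicalSpace S] [DiscreteTopology S]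
    (m : (S →ᵇ ℝ) →L[ℝ] ℝ) : Prop :=
  (∀ f : S →ᵇ ℝ, (∀ t, 0 ≤ f t) → 0 ≤ m f) ∧ ‖m‖ = 1 ∧
  m (const S (1 : ℝ)) = 1 ∧
  (∀ (f : S →ᵇ ℝ) (s : S), m (rightTranslate f s) = m f) ∧
  (∀ (f : S →ᵇ ℝ) (s : S), m (leftTranslate f s) = m f)

open NormedSpace

section Aux

variable {S : Type*} [Semigroup S] [TopologicalSpace S] [DiscreteTopology S]

private lemma mean_const' (m : (S →ᵇ ℝ) →L[ℝ] ℝ) (h1 : m (const S (1 : ℝ)) = 1) (c : ℝ) :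
    m (const S c) = c := by
  have hc : const S c = c • const S (1 : ℝ) := by ext t; simp
  rw [hc, map_smul, h1, smul_eq_mul, mul_one]

private lemma mean_le_of_le (m : (S →ᵇ ℝ) →L[ℝ] ℝ)
    (hpos : ∀ f : S →ᵇ ℝ, (∀ t, 0 ≤ f t) → 0 ≤ m f)
    (h1 : m (const S (1 : ℝ)) = 1) (g : S →ᵇ ℝ) (c : ℝ) (hg : ∀ t, g t ≤ c) : m g ≤ c := by
  have h0 : (0:ℝ) ≤ m (const S c - g) := by
    refine hpos _ fun t => ?_
    simp only [BoundedContinuousFunction.coe_sub, Pi.sub_apply, const_apply]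
    linarith [hg t]
  rw [map_sub, mean_const' m h1] at h0
  linarith

variable {Z : Type*} [NormedAddCommGroup Z] [NormedSpace ℝ Z]

/-- Scalarization: postcompose a bounded `Dual ℝ Z`-valued function with evaluation at `z`. -/
private def scalarize (z : Z) : (S →ᵇ StrongDual ℝ Z) →L[ℝ] (S →ᵇ ℝ) :=
  (NormedSpace.inclusionInDoubleDual ℝ Z z).compLeftContinuousBounded S

private lemma scalarize_apply (z : Z) (f : S →ᵇ StrongDual ℝ Z) (t : S) :
    scalarize z f t = f t z := rfl

private lemma norm_scalarize_le (z : Z) (f : S →ᵇ StrongDual ℝ Z) :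
    ‖scalarize z f‖ ≤ ‖f‖ * ‖z‖ := by
  refine BoundedContinuousFunction.norm_le (by positivity) |>.mpr fun t => ?_
  calc ‖scalarize z f t‖ = ‖f t z‖ := rfl
    _ ≤ ‖f t‖ * ‖z‖ := (f t).le_opNorm z
    _ ≤ ‖f‖ * ‖z‖ := by
        have := f.norm_coe_le_norm t
        exact mul_le_mul_of_nonneg_right this (norm_nonneg z)

/-- The vector-valued mean as a linear map in `z` for fixed `f`. -/
private def Mfun (m : (S →ᵇ ℝ) →L[ℝ] ℝ) (f : S →ᵇ StrongDual ℝ Z) :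
    StrongDual ℝ Z :=
  LinearMap.mkContinuous
    { toFun := fun z => m (scalarize z f)
      map_add' := fun z w => by
        show m (scalarize (z + w) f) = m (scalarize z f) + m (scalarize w f)
        have h : scalarize (z + w) f = scalarize z f + scalarize w f := by
          ext t
          simp only [scalarize_apply, BoundedContinuousFunction.coe_add, Pi.add_apply,
            map_add]
        rw [h, map_add]
      map_smul' := fun c z => by
        show m (scalarize (c • z) f) = c • m (scalarize z f)
        have h : scalarize (c • z) f = c • scalarize z f := by
          ext t
          simp only [scalarize_apply, BoundedContinuousFunction.coe_smul, Pi.smul_apply,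
            map_smul, smul_eq_mul]
        rw [h, map_smul] }
    (‖m‖ * ‖f‖)
    (fun z => by
      calc ‖m (scalarize z f)‖ ≤ ‖m‖ * ‖scalarize z f‖ := m.le_opNorm _
        _ ≤ ‖m‖ * (‖f‖ * ‖z‖) :=
            mul_le_mul_of_nonneg_left (norm_scalarize_le z f) (norm_nonneg m)
        _ = ‖m‖ * ‖f‖ * ‖z‖ := by ring)

private lemma Mfun_apply (m : (S →ᵇ ℝ) →L[ℝ] ℝ) (f : S →ᵇ StrongDual ℝ Z) (z : Z) :
    Mfun m f z = m (scalarize z f) := rfl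

/-- The vector-valued mean as a continuous linear map. -/
private def Mclm (m : (S →ᵇ ℝ) →L[ℝ] ℝ) :
    (S →ᵇ StrongDual ℝ Z) →L[ℝ] StrongDual ℝ Z :=
  LinearMap.mkContinuous
    { toFun := Mfun m
      map_add' := fun f g => by
        ext z
        have h : scalarize z (f + g) = scalarize z f + scalarize z g := map_add _ _ _
        simp only [Mfun_apply, ContinuousLinearMap.add_apply, h, map_add]
      map_smul' := fun c f => by
        ext z
        have h : scalarize z (c • f) = c • scalarize z f := map_smul _ _ _
        simp only [Mfun_apply, RingHom.id_apply, ContinuousLinearMap.coe_smul',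
          Pi.smul_apply, h, map_smul, smul_eq_mul] }
    ‖m‖
    (fun f => by
      refine ContinuousLinearMap.opNorm_le_bound _ (by positivity) fun z => ?_
      calc ‖Mfun m f z‖ = ‖m (scalarize z f)‖ := rfl
        _ ≤ ‖m‖ * ‖scalarize z f‖ := m.le_opNorm _
        _ ≤ ‖m‖ * (‖f‖ * ‖z‖) :=
            mul_le_mul_of_nonneg_left (norm_scalarize_le z f) (norm_nonneg m)
        _ = ‖m‖ * ‖f‖ * ‖z‖ := by ring)

private lemma Mclm_apply (m : (S →ᵇ ℝ) →L[ℝ] ℝ) (f : S →ᵇ StrongDual ℝ Z) (z : Z) :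
    Mclm m f z = m (scalarize z f) := rfl

/-- Closure criterion in `WeakDual`. -/
private lemma mem_closure_weakDual {x : WeakDual ℝ Z} {A : Set (WeakDual ℝ Z)}
    (h : ∀ (F : Finset Z) (ε : ℝ), 0 < ε → ∃ a ∈ A, ∀ z ∈ F, ‖a z - x z‖ < ε) :
    x ∈ closure A := by
  have hb := (topDualPairing ℝ Z).hasBasis_weakBilin
  have hx : (nhds x).HasBasis (fun U => U ∈ (topDualPairing ℝ Z).toSeminormFamily.basisSets)
      (fun U => (fun u => x + u) '' U) := by
    rw [← map_add_left_nhds_zero x]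
    exact hb.map _
  rw [mem_closure_iff_nhds_basis hx]
  intro U hU
  obtain ⟨F, r, hr, rfl⟩ := (topDualPairing ℝ Z).toSeminormFamily.basisSets_iff.mp hU
  obtain ⟨a, ha, hFa⟩ := h F r hr
  have hmem : a - x ∈ (F.sup (topDualPairing ℝ Z).toSeminormFamily).ball 0 r := by
    refine (Seminorm.mem_ball_zero _).mpr ?_
    refine Seminorm.finset_sup_apply_lt hr fun z hz => ?_
    show ‖(topDualPairing ℝ Z) (a - x) z‖ < r
    have h2 : (topDualPairing ℝ Z) (a - x) z = a z - x z := rfl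
    rw [h2]
    exact hFa z hz
  refine ⟨a, ha, ⟨a - x, hmem, ?_⟩⟩
  show x + (a - x) = a
  rw [add_comm]
  exact sub_add_cancel a x

end Aux


/-- If `S` is a semigroup admitting an invariant mean (both left and right invariant) and
`X = Z*` is a dual Banach space, then there is an `X`-valued invariant mean `M` on the
bounded `X`-valued functions on `S` such that `M f` always lies in the weak*-closed convex
hull of the range of `f`. -/
theorem exists_dual_valued_invariant_mean_in_weakstar_hull
    {S : Type*} [Semigroup S] [TopologicalSpace S] [DiscreteTopology S]
    {Z : Type*} [NormedAddCommGroup Z] [NormedSpace ℝ Z]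
    (m : (S →ᵇ ℝ) →L[ℝ] ℝ) (hm : IsInvariantMean m) :
    ∃ M : (S →ᵇ StrongDual ℝ Z) →L[ℝ] StrongDual ℝ Z,
      (∀ x : StrongDual ℝ Z, M (const S x) = x) ∧
      (∀ (f : S →ᵇ StrongDual ℝ Z) (s : S), M (leftTranslate f s) = M f) ∧
      (∀ (f : S →ᵇ StrongDual ℝ Z) (s : S), M (rightTranslate f s) = M f) ∧
      ∀ f : S →ᵇ StrongDual ℝ Z,
        StrongDual.toWeakDual (M f) ∈
          closure (convexHull ℝ (StrongDual.toWeakDual '' Set.range ⇑f)) := by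
  classical
  obtain ⟨hpos, hnorm, hone, hright, hleft⟩ := hm
  refine ⟨Mclm m, ?_, ?_, ?_, ?_⟩
  · intro x
    ext z
    rw [Mclm_apply]
    have : scalarize z (const S x) = const S (x z) := by ext t; rfl
    rw [this, mean_const' m hone]
  · intro f s
    ext z
    rw [Mclm_apply, Mclm_apply]
    have : scalarize z (leftTranslate f s) = leftTranslate (scalarize z f) s := by ext t; rfl
    rw [this, hleft]
  · intro f s
    ext z
    rw [Mclm_apply, Mclm_apply]
    have : scalarize z (rightTranslate f s) = rightTranslate (scalarize z f) s := by ext t; rfl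
    rw [this, hright]
  · intro f
    refine mem_closure_weakDual fun F ε hε => ?_
    -- the finite-dimensional picture
    set ev : StrongDual ℝ Z →L[ℝ] (↥F → ℝ) :=
      ContinuousLinearMap.pi (fun z : ↥F => NormedSpace.inclusionInDoubleDual ℝ Z (z : Z)) with hev
    set vecf : S →ᵇ (↥F → ℝ) := ev.compLeftContinuousBounded S f with hvecf
    set p : ↥F → ℝ := fun z => m (scalarize (z : Z) f) with hp
    have hvecf_apply : ∀ t, vecf t = fun z : ↥F => f t (z : Z) := fun t => rfl
    -- Step 1: p lies in the closure of the convex hull of the range of vecf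
    have hp_mem : p ∈ closure (convexHull ℝ (Set.range ⇑vecf)) := by
      by_contra hcon
      obtain ⟨g, c, hgs, hgp⟩ :=
        geometric_hahn_banach_closed_point ((convex_convexHull ℝ _).closure)
          isClosed_closure hcon
      set cz : ↥F → ℝ := fun z => g (fun j => if z = j then (1:ℝ) else 0) with hcz
      have hgq : ∀ q : ↥F → ℝ, g q = ∑ z : ↥F, cz z * q z := by
        intro q
        conv_lhs => rw [pi_eq_sum_univ q, map_sum]
        refine Finset.sum_congr rfl fun z _ => ?_
        rw [map_smul, smul_eq_mul, mul_comm]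
      have hB : (g.compLeftContinuousBounded S vecf : S →ᵇ ℝ) =
          ∑ z : ↥F, cz z • scalarize (z : Z) f := by
        ext t
        simp only [ContinuousLinearMap.compLeftContinuousBounded_apply]
        rw [hgq (vecf t)]
        rw [BoundedContinuousFunction.coe_sum, Finset.sum_apply]
        refine Finset.sum_congr rfl fun z _ => ?_
        simp [scalarize_apply, hvecf_apply, smul_eq_mul]
      have hmB : m (g.compLeftContinuousBounded S vecf) = g p := by
        rw [hB, map_sum, hgq p]
        refine Finset.sum_congr rfl fun z _ => ?_
        rw [map_smul, smul_eq_mul]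
      have hlt : ∀ t, (g.compLeftContinuousBounded S vecf) t ≤ c := by
        intro t
        have hmem : vecf t ∈ closure (convexHull ℝ (Set.range ⇑vecf)) :=
          subset_closure (subset_convexHull ℝ _ (Set.mem_range_self t))
        exact le_of_lt (hgs _ hmem)
      have := mean_le_of_le m hpos hone _ c hlt
      rw [hmB] at this
      linarith
    -- Step 2: extract a point of the convex hull close to p
    rw [Metric.mem_closure_iff] at hp_mem
    obtain ⟨q, hq, hdist⟩ := hp_mem ε hε
    -- Step 3: lift q back to the convex hull in the weak dual
    set Φ : WeakDual ℝ Z →ₗ[ℝ] (↥F → ℝ) :=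
      { toFun := fun a => fun z : ↥F => a (z : Z)
        map_add' := fun a b => by ext z; rfl
        map_smul' := fun c a => by ext z; rfl } with hΦ
    have himg : Set.range ⇑vecf = Φ '' (StrongDual.toWeakDual '' Set.range ⇑f) := by
      rw [← Set.range_comp, ← Set.range_comp]
      rfl
    rw [himg, ← Φ.image_convexHull] at hq
    obtain ⟨a, haA, hΦa⟩ := hq
    refine ⟨a, haA, fun z hz => ?_⟩
    have h1 : a z = q ⟨z, hz⟩ := by rw [← hΦa]; rfl
    have h2 : (StrongDual.toWeakDual (Mclm m f)) z = p ⟨z, hz⟩ := rfl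
    rw [h1, h2]
    calc ‖q ⟨z, hz⟩ - p ⟨z, hz⟩‖ = dist (q ⟨z, hz⟩) (p ⟨z, hz⟩) := by
          rw [Real.dist_eq]; rfl
      _ ≤ dist q p := dist_le_pi_dist q p ⟨z, hz⟩
      _ = dist p q := dist_comm q p
      _ < ε := hdist
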